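/- Let η ≠ -1 and let A be a primitive PC(η)-axial algebra. If a and b are primitive axes of A, then φ_a(b) = 1; equivalently, (a,b) = 1 for the Frobenius form normalized by (a,a) = 1 on primitive axes. -/
import Mathlib


open Submodule

variable {F : Type*} [Field F] {A : Type*} [NonUnitalNonAssocCommRing A]
  [Module F A] [SMulCommClass F A A] [IsScalarTower F A A]

variable (F) in
/-- The `lam`-eigenspace of the adjoint map of `a`. -/
def PCeig (a : A) (lam : F) : Submodule F A where
  carrier := {x : A | a * x = lam • x}
  add_mem' := by
    intro x y hx hy
    simp only [Set.mem_setOf_eq] at hx hy ⊢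
    rw [mul_add, hx, hy, smul_add]
  zero_mem' := by simp
  smul_mem' := by
    intro c x hx
    simp only [Set.mem_setOf_eq] at hx ⊢
    rw [mul_smul_comm, hx, smul_smul, smul_smul, mul_comm]

variable (F) in
/-- The fusion law `PC(η)` for an idempotent (axis) `a`. -/
structure IsPCAxis (η : F) (a : A) : Prop where
  idem : a * a = a
  decomp : PCeig F a 1 ⊔ PCeig F a η ⊔ PCeig F a (1/2 : F) = ⊤
  fus11 : ∀ x ∈ PCeig F a 1, ∀ y ∈ PCeig F a 1, x * y ∈ PCeig F a 1
  fus1e : ∀ x ∈ PCeig F a 1, ∀ y ∈ PCeig F a η, x * y ∈ PCeig F a η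
  fus1h : ∀ x ∈ PCeig F a 1, ∀ y ∈ PCeig F a (1/2 : F), x * y ∈ PCeig F a (1/2 : F)
  fusee : ∀ x ∈ PCeig F a η, ∀ y ∈ PCeig F a η, x * y ∈ PCeig F a 1
  fuseh : ∀ x ∈ PCeig F a η, ∀ y ∈ PCeig F a (1/2 : F), x * y ∈ PCeig F a (1/2 : F)
  fushh : ∀ x ∈ PCeig F a (1/2 : F), ∀ y ∈ PCeig F a (1/2 : F),
    x * y ∈ PCeig F a 1 ⊔ PCeig F a η

variable (F) in
/-- A primitive axis: an axis with `A_1(a) = F·a` (one-dimensional). -/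
def IsPrimPCAxis (η : F) (a : A) : Prop :=
  IsPCAxis F η a ∧ a ≠ 0 ∧ PCeig F a 1 = Submodule.span F {a}

variable (F A) in
/-- A `PC(η)`-axial algebra: generated, as a non-unital algebra, by a (nonempty) set of axes. -/
def IsPCAxialAlgebra (η : F) : Prop :=
  ∃ X : Set A, X.Nonempty ∧ (∀ a ∈ X, IsPCAxis F η a) ∧
    NonUnitalAlgebra.adjoin F X = ⊤

variable (F A) in
/-- A primitive `PC(η)`-axial algebra: generated by a (nonempty) set of primitive axes. -/
def IsPrimPCAxialAlgebra (η : F) : Prop :=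
  ∃ X : Set A, X.Nonempty ∧ (∀ a ∈ X, IsPrimPCAxis F η a) ∧
    NonUnitalAlgebra.adjoin F X = ⊤

private lemma pceig_mem_iff {a x : A} {lam : F} : x ∈ PCeig F a lam ↔ a * x = lam • x :=
  Iff.rfl

private lemma direct3 (a : A) {l m n : F} (hlm : l ≠ m) (hln : l ≠ n) (hmn : m ≠ n)
    {x y z : A} (hx : x ∈ PCeig F a l) (hy : y ∈ PCeig F a m) (hz : z ∈ PCeig F a n)
    (hsum : x + y + z = 0) : x = 0 ∧ y = 0 ∧ z = 0 := by
  have hx' : a * x = l • x := hx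
  have hy' : a * y = m • y := hy
  have hz' : a * z = n • z := hz
  have h1 : l • x + m • y + n • z = 0 := by
    rw [← hx', ← hy', ← hz', ← mul_add, ← mul_add, hsum, mul_zero]
  have h2 : l • (a * x) + m • (a * y) + n • (a * z) = 0 := by
    rw [← mul_smul_comm, ← mul_smul_comm, ← mul_smul_comm, ← mul_add, ← mul_add, h1, mul_zero]
  rw [hx', hy', hz', smul_smul, smul_smul, smul_smul] at h2
  have gx : ((l - m) * (l - n)) • x = 0 := by
    have e : ((l - m) * (l - n)) • x =
        ((l*l) • x + (m*m) • y + (n*n) • z) - (m+n) • (l • x + m • y + n • z)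
          + (m*n) • (x + y + z) := by module
    rw [h1, h2, hsum, smul_zero, smul_zero, sub_zero, add_zero] at e
    exact e
  have gy : ((m - l) * (m - n)) • y = 0 := by
    have e : ((m - l) * (m - n)) • y =
        ((l*l) • x + (m*m) • y + (n*n) • z) - (l+n) • (l • x + m • y + n • z)
          + (l*n) • (x + y + z) := by module
    rw [h1, h2, hsum, smul_zero, smul_zero, sub_zero, add_zero] at e
    exact e
  have gz : ((n - l) * (n - m)) • z = 0 := by
    have e : ((n - l) * (n - m)) • z =
        ((l*l) • x + (m*m) • y + (n*n) • z) - (l+m) • (l • x + m • y + n • z)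
          + (l*m) • (x + y + z) := by module
    rw [h1, h2, hsum, smul_zero, smul_zero, sub_zero, add_zero] at e
    exact e
  refine ⟨?_, ?_, ?_⟩
  · rcases smul_eq_zero.mp gx with h | h
    · exact absurd h (mul_ne_zero (sub_ne_zero.mpr hlm) (sub_ne_zero.mpr hln))
    · exact h
  · rcases smul_eq_zero.mp gy with h | h
    · exact absurd h (mul_ne_zero (sub_ne_zero.mpr hlm.symm) (sub_ne_zero.mpr hmn))
    · exact h
  · rcases smul_eq_zero.mp gz with h | h
    · exact absurd h (mul_ne_zero (sub_ne_zero.mpr hln.symm) (sub_ne_zero.mpr hmn.symm))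
    · exact h

set_option maxHeartbeats 4000000 in
/-- if `η ≠ -1`, then for any two primitive axes `a`, `b` of a primitive
`PC(η)`-axial algebra, `φ_a(b) = 1`. -/
theorem stmt8 (η : F) (h2 : (2 : F) ≠ 0) (hη1 : η ≠ 1) (hηh : η ≠ 1 / 2) (hηm : η ≠ -1)
    (hA : IsPrimPCAxialAlgebra F A η)
    (a b : A) (ha : IsPrimPCAxis F η a) (hb : IsPrimPCAxis F η b)
    (α : F) (u v : A)
    (hu : u ∈ PCeig F a η) (hv : v ∈ PCeig F a (1 / 2 : F))
    (hbd : b = α • a + u + v) :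
    α = 1 := by
  obtain ⟨hax, ha0, haP⟩ := ha
  obtain ⟨hbx, hb0, hbP⟩ := hb
  have h2i : (1/2:F) * 2 = 1 := by rw [one_div]; exact inv_mul_cancel₀ h2
  have hu' : a * u = η • u := hu
  have hv' : a * v = (1/2 : F) • v := hv
  have haa : a * a = a := hax.idem
  have hua : u * a = η • u := by rw [mul_comm]; exact hu'
  have hva : v * a = (1/2 : F) • v := by rw [mul_comm]; exact hv'
  have hvu : v * u = u * v := mul_comm v u
  have haE : a ∈ PCeig F a 1 := by
    show a * a = (1:F) • a
    rw [one_smul]; exact haa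
  have hupmem : u * u ∈ PCeig F a 1 := hax.fusee u hu u hu
  rw [haP, Submodule.mem_span_singleton] at hupmem
  obtain ⟨p, hp⟩ := hupmem
  have hpp : u * u = p • a := hp.symm
  have hvvmem : v * v ∈ PCeig F a 1 ⊔ PCeig F a η := hax.fushh v hv v hv
  rw [Submodule.mem_sup] at hvvmem
  obtain ⟨y, hy, w, hw, hyw⟩ := hvvmem
  rw [haP, Submodule.mem_span_singleton] at hy
  obtain ⟨q, hq⟩ := hy
  have hvv : v * v = q • a + w := by rw [← hyw, ← hq]
  have huvmem : u * v ∈ PCeig F a (1/2 : F) := hax.fuseh u hu v hv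
  have hLmul : (α • a + u + v) * (α • a + u + v)
      = (α*α + p + q) • a + ((2*α*η) • u + w) + (α • v + (u*v + u*v)) := by
    simp only [mul_add, add_mul, smul_mul_assoc, mul_smul_comm, haa, hu', hv', hua, hva,
      hpp, hvv, hvu]
    match_scalars <;> first
      | ring1
      | linear_combination α*h2i
  have hexp : (α*α + p + q) • a + ((2*α*η) • u + w) + (α • v + (u*v + u*v))
      = α • a + u + v := by
    have h0 : b * b = b := hbx.idem
    rw [hbd] at h0
    rw [← hLmul]; exact h0
  have hsum0 : (α*α + p + q - α) • a + ((2*α*η - 1) • u + w)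
      + ((α - 1) • v + (u*v + u*v)) = 0 := by
    have e : (α*α + p + q - α) • a + ((2*α*η - 1) • u + w) + ((α - 1) • v + (u*v + u*v))
        = ((α*α + p + q) • a + ((2*α*η) • u + w) + (α • v + (u*v + u*v)))
          - (α • a + u + v) := by module
    rw [e, hexp, sub_self]
  have h1η : (1:F) ≠ η := Ne.symm hη1
  have h1h : (1:F) ≠ 1/2 := by
    intro h
    rw [eq_div_iff h2] at h
    exact one_ne_zero (α := F) (by linear_combination h)
  obtain ⟨e1, e2, e3⟩ := direct3 a h1η h1h hηh
    (Submodule.smul_mem _ _ haE)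
    (add_mem (Submodule.smul_mem _ _ hu) hw)
    (add_mem (Submodule.smul_mem _ _ hv) (add_mem huvmem huvmem))
    hsum0
  have hAq : α*α + p + q - α = 0 := by
    rcases smul_eq_zero.mp e1 with h | h
    · exact h
    · exact absurd h ha0
  have hqd : q = α - α*α - p := by linear_combination hAq
  subst hqd
  have hww : w = (1 - 2*α*η) • u := by
    have t1 : w - (1 - 2*α*η) • u = (2*α*η - 1) • u + w := by module
    rw [e2] at t1
    exact sub_eq_zero.mp t1
  have huv2 : u*v + u*v = (1 - α) • v := by
    have t2 : (u*v + u*v) - (1 - α) • v = (α - 1) • v + (u*v + u*v) := by module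
    rw [e3] at t2
    exact sub_eq_zero.mp t2
  have huvs : u * v = ((1 - α)/2) • v := by
    have h' : (2:F) • (u*v) = (1 - α) • v := by rw [two_smul]; exact huv2
    calc u*v = ((2:F)⁻¹ * 2) • (u*v) := by rw [inv_mul_cancel₀ h2, one_smul]
    _ = (2:F)⁻¹ • ((2:F) • (u*v)) := by rw [← smul_smul]
    _ = (2:F)⁻¹ • ((1 - α) • v) := by rw [h']
    _ = ((1 - α)/2) • v := by
        rw [smul_smul, show (2:F)⁻¹ * (1 - α) = (1 - α)/2 from by ring]
  have hba : b * a = α • a + η • u + (1/2:F) • v := by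
    rw [hbd, add_mul, add_mul, smul_mul_assoc, haa, hua, hva]
  have hbu : b * u = p • a + (α*η) • u + ((1 - α)/2) • v := by
    rw [hbd, add_mul, add_mul, smul_mul_assoc, hu', hpp, hvu, huvs]
    module
  have hbv : b * v = (α - α*α - p) • a + (1 - 2*α*η) • u + (1/2 : F) • v := by
    rw [hbd, add_mul, add_mul, smul_mul_assoc, hv', huvs, hvv, hww]
    module
  have key : ∀ x : A, b*(b*(b*x)) - ((3:F)/2 + η) • (b*(b*x)) + ((3*η+1)/2) • (b*x)
      - (η/2) • x = 0 := by
    let T : A →ₗ[F] A := LinearMap.mulLeft F b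
    let L : A →ₗ[F] A := (T ∘ₗ (T ∘ₗ T)) - ((3:F)/2 + η) • (T ∘ₗ T) + ((3*η+1)/2) • T
      - (η/2) • (LinearMap.id : A →ₗ[F] A)
    have hLx : ∀ x : A, L x = b*(b*(b*x)) - ((3:F)/2 + η) • (b*(b*x))
        + ((3*η+1)/2) • (b*x) - (η/2) • x := fun x => rfl
    have step : ∀ lam : F, (lam^3 - ((3:F)/2 + η)*lam^2 + ((3*η+1)/2)*lam - η/2 = 0) →
        PCeig F b lam ≤ LinearMap.ker L := by
      intro lam hlam x hx
      have hx' : b * x = lam • x := hx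
      rw [LinearMap.mem_ker, hLx]
      simp only [hx', mul_smul_comm]
      match_scalars
      linear_combination hlam
    intro x
    have hx : x ∈ PCeig F b 1 ⊔ PCeig F b η ⊔ PCeig F b (1/2 : F) := by
      rw [hbx.decomp]; exact Submodule.mem_top
    have hxk := (sup_le (sup_le
        (step 1 (by linear_combination ((-1:F) + η)*h2i))
        (step η (by ring)))
        (step (1/2 : F) (by linear_combination ((-1:F)*(1/2:F)^2 + η*(1/2:F))*h2i))) hx
    rw [LinearMap.mem_ker, hLx] at hxk
    exact hxk
  have hy2 : b*(b*a) = (α*α + η*p + (1/2:F)*(α - α*α - p)) • a + (α*η + η*(α*η) + (1/2:F)*(1 - 2*α*η)) • u + (α*(1/2:F) + η*((1-α)/2) + (1/2:F)*(1/2:F)) • v := by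
    rw [hba, mul_add, mul_add, mul_smul_comm, mul_smul_comm, mul_smul_comm, hba, hbu, hbv]
    match_scalars <;> ring
  have hy3 : b*(b*(b*a)) = ((α*α + η*p + (1/2:F)*(α - α*α - p))*α + (α*η + η*(α*η) + (1/2:F)*(1 - 2*α*η))*p + (α*(1/2:F) + η*((1-α)/2) + (1/2:F)*(1/2:F))*(α - α*α - p)) • a + ((α*α + η*p + (1/2:F)*(α - α*α - p))*η + (α*η + η*(α*η) + (1/2:F)*(1 - 2*α*η))*(α*η) + (α*(1/2:F) + η*((1-α)/2) + (1/2:F)*(1/2:F))*(1 - 2*α*η)) • u + ((α*α + η*p + (1/2:F)*(α - α*α - p))*(1/2:F) + (α*η + η*(α*η) + (1/2:F)*(1 - 2*α*η))*((1-α)/2) + (α*(1/2:F) + η*((1-α)/2) + (1/2:F)*(1/2:F))*(1/2:F)) • v := by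
    rw [hy2, mul_add, mul_add, mul_smul_comm, mul_smul_comm, mul_smul_comm, hba, hbu, hbv]
    match_scalars <;> ring
  have hkey : ((-1:F)*η*(1/2:F) + (1:F)*p*(1/2:F) + (2:F)*p*(1/2:F)^2 + (-3:F)*p*η*(1/2:F) + (-1:F)*p*η^2 + (1:F)*α*(1/2:F) + (-2:F)*α*(1/2:F)^2 + (3:F)*α*η*(1/2:F) + (-2:F)*α*p*(1/2:F) + (2:F)*α*p*η + (-1:F)*α*p*η*(1/2:F) + (1:F)*α*p*η^2 + (-1:F)*α^2*(1/2:F) + (2:F)*α^2*(1/2:F)^2 + (-1:F)*α^2*η + (-1:F)*α^2*η*(1/2:F) + (1:F)*α^3 + (-2:F)*α^3*(1/2:F) + (1:F)*α^3*η*(1/2:F)) • a + ((-2:F)*(1/2:F)^2 + (1:F)*η*(1/2:F) + (3:F)*η^2*(1/2:F) + (-1:F)*p*η*(1/2:F) + (1:F)*p*η^2 + (1:F)*α*(1/2:F) + (-2:F)*α*η*(1/2:F) + (4:F)*α*η*(1/2:F)^2 + (-1:F)*α*η^2 + (-3:F)*α*η^2*(1/2:F) + (-1:F)*α*η^3 +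 (1:F)*α^2*η + (-3:F)*α^2*η*(1/2:F) + (1:F)*α^2*η^2 + (1:F)*α^2*η^3) • u + ((2:F)*(1/2:F)^2 + (-2:F)*(1/2:F)^3 + (-1:F)*η^2*(1/2:F) + (-1:F)*p*(1/2:F)^2 + (1:F)*p*η*(1/2:F) + (-2:F)*α*(1/2:F)^2 + (2:F)*α*η^2*(1/2:F) + (1:F)*α^2*(1/2:F) + (-1:F)*α^2*(1/2:F)^2 + (-1:F)*α^2*η*(1/2:F) + (2:F)*α^2*η*(1/2:F)^2 + (-1:F)*α^2*η^2*(1/2:F)) • v = 0 := by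
    have e : ((-1:F)*η*(1/2:F) + (1:F)*p*(1/2:F) + (2:F)*p*(1/2:F)^2 + (-3:F)*p*η*(1/2:F) + (-1:F)*p*η^2 + (1:F)*α*(1/2:F) + (-2:F)*α*(1/2:F)^2 + (3:F)*α*η*(1/2:F) + (-2:F)*α*p*(1/2:F) + (2:F)*α*p*η + (-1:F)*α*p*η*(1/2:F) + (1:F)*α*p*η^2 + (-1:F)*α^2*(1/2:F) + (2:F)*α^2*(1/2:F)^2 + (-1:F)*α^2*η + (-1:F)*α^2*η*(1/2:F) + (1:F)*α^3 + (-2:F)*α^3*(1/2:F) + (1:F)*α^3*η*(1/2:F)) • a + ((-2:F)*(1/2:F)^2 + (1:F)*η*(1/2:F) + (3:F)*η^2*(1/2:F) + (-1:F)*p*η*(1/2:F) + (1:F)*p*η^2 + (1:F)*α*(1/2:F) + (-2:F)*α*η*(1/2:F) + (4:F)*α*η*(1/2:F)^2 + (-1:F)*α*η^2 + (-3:F)*α*η^2*(1/2:F) + (-1:F)*α*η^3 + (1:F)*α^2*η + (-3:F)*α^2*η*(1/2:F) + (1:F)*α^2*η^2 + (1:F)*α^2*η^3) • u + ((2:F)*(1/2:F)^2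 + (-2:F)*(1/2:F)^3 + (-1:F)*η^2*(1/2:F) + (-1:F)*p*(1/2:F)^2 + (1:F)*p*η*(1/2:F) + (-2:F)*α*(1/2:F)^2 + (2:F)*α*η^2*(1/2:F) + (1:F)*α^2*(1/2:F) + (-1:F)*α^2*(1/2:F)^2 + (-1:F)*α^2*η*(1/2:F) + (2:F)*α^2*η*(1/2:F)^2 + (-1:F)*α^2*η^2*(1/2:F)) • v
        = (((α*α + η*p + (1/2:F)*(α - α*α - p))*α + (α*η + η*(α*η) + (1/2:F)*(1 - 2*α*η))*p + (α*(1/2:F) + η*((1-α)/2) + (1/2:F)*(1/2:F))*(α - α*α - p)) • a + ((α*α + η*p + (1/2:F)*(α - α*α - p))*η + (α*η + η*(α*η) + (1/2:F)*(1 - 2*α*η))*(α*η) + (α*(1/2:F) + η*((1-α)/2) + (1/2:F)*(1/2:F))*(1 - 2*α*η)) • u + ((α*α + η*p + (1/2:F)*(α - α*α - p))*(1/2:F) + (α*η + η*(α*η) + (1/2:F)*(1 - 2*α*η))*((1-α)/2) + (α*(1/2:F) + η*((1-α)/2) + (1/2:F)*(1/2:F))*(1/2:F)) • v) - ((3:F)/2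 + η) • ((α*α + η*p + (1/2:F)*(α - α*α - p)) • a + (α*η + η*(α*η) + (1/2:F)*(1 - 2*α*η)) • u + (α*(1/2:F) + η*((1-α)/2) + (1/2:F)*(1/2:F)) • v) + ((3*η+1)/2) • (α • a + η • u + (1/2:F) • v) - (η/2) • a := by
      module
    rw [e, ← hy3, ← hy2, ← hba]
    exact key a
  obtain ⟨k1, k2, k3⟩ := direct3 a h1η h1h hηh (Submodule.smul_mem _ _ haE)
    (Submodule.smul_mem _ _ hu) (Submodule.smul_mem _ _ hv) hkey
  by_cases hα1 : α = 1
  · exact hα1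
  exfalso
  have hβ : (1:F) - α ≠ 0 := sub_ne_zero.mpr (Ne.symm hα1)
  have h1pη : (1:F) + η ≠ 0 := fun h => hηm (by linear_combination h)
  have h2η1 : 2*η - (1:F) ≠ 0 := fun h => hηh (by linear_combination (1/2:F)*h - η*h2i)
  have h12η : (1:F) - 2*η ≠ 0 := fun h => hηh (by linear_combination (-1:F)*(1/2:F)*h - η*h2i)
  by_cases hv0 : v = 0
  · rw [hv0, mul_zero] at hvv
    have hvv0 : (α - α*α - p) • a + w + (0:A) = 0 := by rw [add_zero, ← hvv]
    obtain ⟨f1, f2, f3⟩ := direct3 a h1η h1h hηh (Submodule.smul_mem _ _ haE) hw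
      (Submodule.zero_mem _) hvv0
    have hApq : α - α*α - p = 0 := by
      rcases smul_eq_zero.mp f1 with h | h
      · exact h
      · exact absurd h ha0
    by_cases hu0 : u = 0
    · have hp0 : p = 0 := by
        have hz : p • a = 0 := by rw [← hpp, hu0, mul_zero]
        rcases smul_eq_zero.mp hz with h | h
        · exact h
        · exact absurd h ha0
      have hα0 : α ≠ 0 := by
        intro h0
        apply hb0
        rw [hbd, hu0, hv0, h0, zero_smul, add_zero, add_zero]
      rcases mul_eq_zero.mp (show α * (1 - α) = 0 from by linear_combination hApq + hp0)
        with h | h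
      · exact hα0 h
      · exact hα1 (by linear_combination -h)
    · have h2ae : 2*α*η = 1 := by
        rw [hww] at f2
        rcases smul_eq_zero.mp f2 with h | h
        · linear_combination -h
        · exact absurd h hu0
      have hp0 : p = α - α*α := by linear_combination -hApq
      have hY : ((-2:F)*(1/2:F)^2 + (1:F)*η*(1/2:F) + (3:F)*η^2*(1/2:F) + (-1:F)*p*η*(1/2:F) + (1:F)*p*η^2 + (1:F)*α*(1/2:F) + (-2:F)*α*η*(1/2:F) + (4:F)*α*η*(1/2:F)^2 + (-1:F)*α*η^2 + (-3:F)*α*η^2*(1/2:F) + (-1:F)*α*η^3 + (1:F)*α^2*η + (-3:F)*α^2*η*(1/2:F) + (1:F)*α^2*η^2 + (1:F)*α^2*η^3) = 0 := by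
        rcases smul_eq_zero.mp k2 with h | h
        · exact h
        · exact absurd h hu0
      have hfalse : ((1:F) - 2*η)^2 * (1 + η) = 0 := by
        linear_combination 4*η*hY - ((1:F) - η - 2*η^2 - 2*η^3 + 2*α*η^3)*h2ae
          - (4*η^3 - 2*η^2)*hp0 + ((2:F)*η + (4:F)*η*(1/2:F) + (-2:F)*η^2 + (-6:F)*η^3 + (2:F)*p*η^2 + (-2:F)*α*η + (-8:F)*α*η^2*(1/2:F) + (6:F)*α*η^3 + (6:F)*α^2*η^2)*h2i
      rcases mul_eq_zero.mp hfalse with h | h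
      · exact h12η ((pow_eq_zero_iff (by norm_num : (2:ℕ) ≠ 0)).mp h)
      · exact h1pη h
  · by_cases hu0 : u = 0
    · rw [hu0, zero_mul] at huvs
      rcases smul_eq_zero.mp huvs.symm with h | h
      · exact hα1 (by linear_combination (-2:F)*h + (1 - α)*h2i)
      · exact hv0 h
    · have hX : ((-1:F)*η*(1/2:F) + (1:F)*p*(1/2:F) + (2:F)*p*(1/2:F)^2 + (-3:F)*p*η*(1/2:F) + (-1:F)*p*η^2 + (1:F)*α*(1/2:F) + (-2:F)*α*(1/2:F)^2 + (3:F)*α*η*(1/2:F) + (-2:F)*α*p*(1/2:F) + (2:F)*α*p*η + (-1:F)*α*p*η*(1/2:F) + (1:F)*α*p*η^2 + (-1:F)*α^2*(1/2:F) + (2:F)*α^2*(1/2:F)^2 + (-1:F)*α^2*η + (-1:F)*α^2*η*(1/2:F) + (1:F)*α^3 + (-2:F)*α^3*(1/2:F) + (1:F)*α^3*η*(1/2:F)) = 0 := by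
        rcases smul_eq_zero.mp k1 with h | h
        · exact h
        · exact absurd h ha0
      have hY : ((-2:F)*(1/2:F)^2 + (1:F)*η*(1/2:F) + (3:F)*η^2*(1/2:F) + (-1:F)*p*η*(1/2:F) + (1:F)*p*η^2 + (1:F)*α*(1/2:F) + (-2:F)*α*η*(1/2:F) + (4:F)*α*η*(1/2:F)^2 + (-1:F)*α*η^2 + (-3:F)*α*η^2*(1/2:F) + (-1:F)*α*η^3 + (1:F)*α^2*η + (-3:F)*α^2*η*(1/2:F) + (1:F)*α^2*η^2 + (1:F)*α^2*η^3) = 0 := by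
        rcases smul_eq_zero.mp k2 with h | h
        · exact h
        · exact absurd h hu0
      have hZ : ((2:F)*(1/2:F)^2 + (-2:F)*(1/2:F)^3 + (-1:F)*η^2*(1/2:F) + (-1:F)*p*(1/2:F)^2 + (1:F)*p*η*(1/2:F) + (-2:F)*α*(1/2:F)^2 + (2:F)*α*η^2*(1/2:F) + (1:F)*α^2*(1/2:F) + (-1:F)*α^2*(1/2:F)^2 + (-1:F)*α^2*η*(1/2:F) + (2:F)*α^2*η*(1/2:F)^2 + (-1:F)*α^2*η^2*(1/2:F)) = 0 := by
        rcases smul_eq_zero.mp k3 with h | h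
        · exact h
        · exact absurd h hv0
      have s1 : p*(1 - 2*η) = (1 - α)^2*(1 - 2*η^2) := by
        linear_combination (-4:F)*hZ + ((1:F) + (2:F)*(1/2:F) + (-4:F)*(1/2:F)^2 + (-2:F)*η^2 + (-1:F)*p + (-2:F)*p*(1/2:F) + (2:F)*p*η + (-2:F)*α + (-4:F)*α*(1/2:F) + (4:F)*α*η^2 + (1:F)*α^2 + (-2:F)*α^2*(1/2:F) + (4:F)*α^2*η*(1/2:F) + (-2:F)*α^2*η^2)*h2i
      have s2 : (1 - α)^3*((1 + η)*((2*η - 1)*(η^2 + η - 1))) = 0 := by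
        linear_combination (1 - 2*η)*hX
          - ((1 - α)*(1 - 3*η*(1/2:F) - η^2))*s1 + ((2:F)*η + (-1:F)*η^2 + (-3:F)*η^3 + (-1:F)*p + (-1:F)*p*(1/2:F) + (2:F)*p*η + (2:F)*p*η*(1/2:F) + (1:F)*α*(1/2:F) + (-6:F)*α*η + (-2:F)*α*η*(1/2:F) + (3:F)*α*η^2 + (9:F)*α*η^3 + (1:F)*α*p + (-4:F)*α*p*η^2 + (-1:F)*α^2*(1/2:F) + (5:F)*α^2*η + (2:F)*α^2*η*(1/2:F) + (-1:F)*α^2*η^2 + (-9:F)*α^2*η^3 + (1:F)*α^3 + (-4:F)*α^3*η + (1:F)*α^3*η^2 + (3:F)*α^3*η^3)*h2i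
      have hgz : η^2 + η - 1 = 0 := by
        rcases mul_eq_zero.mp s2 with h | h
        · exact absurd ((pow_eq_zero_iff (by norm_num : (3:ℕ) ≠ 0)).mp h) hβ
        · rcases mul_eq_zero.mp h with h' | h'
          · exact absurd h' h1pη
          · rcases mul_eq_zero.mp h' with h'' | h''
            · exact absurd h'' h2η1
            · exact h''
      have s3 : (1 - α)*((10 - 16*η)*α - (2 - 3*η)) = 0 := by
        linear_combination (2 - 4*η)*hY - (2*η^2 - η)*s1 + ((1:F) + (4:F)*η^2 + (-11:F)*α + (8:F)*α*η + (-12:F)*α*η^2 + (10:F)*α^2 + (-8:F)*α^2*η + (8:F)*α^2*η^2)*hgz + ((1:F) + (2:F)*(1/2:F) + (-3:F)*η + (-4:F)*η*(1/2:F) + (-1:F)*η^2 + (6:F)*η^3 + (1:F)*p*η + (-2:F)*p*η^2 + (-1:F)*α + (2:F)*α*η + (-4:F)*α*η*(1/2:F) + (3:F)*α*η^2 + (8:F)*α*η^2*(1/2:F) + (-6:F)*α*η^3 + (3:F)*α^2*η + (-6:F)*α^2*η^2)*h2i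
      have s4 : α*((10:F) - 16*η) = 2 - 3*η := by
        rcases mul_eq_zero.mp s3 with h | h
        · exact absurd h hβ
        · linear_combination h
      have h10 : (10:F) - 16*η ≠ 0 := by
        intro h0
        exact one_ne_zero (α := F)
          (by linear_combination 64*hgz + ((8*η + 13)*(1/2:F))*h0
            + ((-65:F) + 64*η + 64*η^2)*h2i)
      have hαv : α = 1 + η/2 :=
        mul_left_cancel₀ h10 (show ((10:F) - 16*η)*α = ((10:F) - 16*η)*(1 + η/2) from by
          linear_combination s4 + 8*hgz + ((-5:F)*η + 8*η^2)*h2i)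
      have hpv : p = (η - 1)*((1/2:F)*(1/2:F)) :=
        mul_right_cancel₀ h12η
          (show p*((1:F) - 2*η) = ((η - 1)*((1/2:F)*(1/2:F)))*((1:F) - 2*η) from by
            linear_combination s1 + ((-1:F) + (1:F)*η*(1/2:F) + (2:F)*η^2 + (-2:F)*η^3*(1/2:F) + (1:F)*α + (-2:F)*α*η^2)*hαv + ((-1:F)*(1/2:F)^2 + (1:F)*η*(1/2:F) + (-1:F)*η^2*(1/2:F))*hgz + ((-1:F)*η*(1/2:F) + (2:F)*η^2*(1/2:F) + (-1:F)*η^4*(1/2:F))*h2i)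
      have hbx2 : b*(η • a + (2:F) • u) = η • a + (2:F) • u := by
        rw [mul_add, mul_smul_comm, mul_smul_comm, hba, hbu]
        match_scalars
        · linear_combination η*hαv + 2*hpv + (1/2:F)*hgz
            + ((-1:F)*(1/2:F) + η*(1/2:F))*h2i
        · linear_combination 2*η*hαv + 2*hgz + (η^2)*h2i
        · linear_combination (-2:F)*(1/2:F)*hαv + ((-1:F)*η*(1/2:F))*h2i
      have hxm : η • a + (2:F) • u ∈ PCeig F b 1 := by
        show b * (η • a + (2:F) • u) = (1:F) • (η • a + (2:F) • u)
        rw [one_smul]; exact hbx2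
      rw [hbP, Submodule.mem_span_singleton] at hxm
      obtain ⟨t, ht⟩ := hxm
      rw [hbd] at ht
      have hvec : (t*α - η) • a + (t - (2:F)) • u + t • v = 0 := by
        rw [show (t*α - η) • a + (t - (2:F)) • u + t • v
            = t • (α • a + u + v) - (η • a + (2:F) • u) from by module, ht, sub_self]
      obtain ⟨d1, d2, d3⟩ := direct3 a h1η h1h hηh (Submodule.smul_mem _ _ haE)
        (Submodule.smul_mem _ _ hu) (Submodule.smul_mem _ _ hv) hvec
      have ht2 : t - 2 = 0 := by
        rcases smul_eq_zero.mp d2 with h | h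
        · exact h
        · exact absurd h hu0
      have ht0 : t = 0 := by
        rcases smul_eq_zero.mp d3 with h | h
        · exact h
        · exact absurd h hv0
      exact h2 (by linear_combination ht0 - ht2)
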